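/- For a uniformly random word w in the set of words with n occurrences each of 1, 2, 3 (n ≥ 1), the expectation of s_1(w) is 0 and the variance of s_1(w) equals n²(2n+1)/3. -/

import Mathlib

/-- Number of pairs of positions i < j with `w i = a` and `w j = b`. -/
def cnt (a b : ℕ) (w : List ℕ) : ℕ :=
  ((Finset.univ : Finset (Fin w.length × Fin w.length)).filter
    (fun p => p.1 < p.2 ∧ w.get p.1 = a ∧ w.get p.2 = b)).card

def s1 (w : List ℕ) : ℤ := (cnt 2 1 w : ℤ) - (cnt 1 2 w : ℤ)
def s2 (w : List ℕ) : ℤ := (cnt 3 2 w : ℤ) - (cnt 2 3 w : ℤ)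
def s3 (w : List ℕ) : ℤ := (cnt 1 3 w : ℤ) - (cnt 3 1 w : ℤ)

/-- The (finite) set of words in {1,2,3} with `a1` ones, `a2` twos and `a3` threes. -/
def W (a1 a2 a3 : ℕ) : Finset (List ℕ) :=
  (List.replicate a1 1 ++ List.replicate a2 2 ++ List.replicate a3 3).permutations.toFinset

/-! ### cnt and s1 lemmas -/

lemma cnt_eq_sum (a b : ℕ) (v : List ℕ) : cnt a b v =
    ∑ i : Fin v.length, ∑ j : Fin v.length,
      if i < j ∧ v.get i = a ∧ v.get j = b then 1 else 0 := by
  rw [cnt, Finset.card_filter, ← Finset.univ_product_univ, Finset.sum_product]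

lemma count_eq_sum (b : ℕ) (w : List ℕ) :
    w.count b = ∑ j : Fin w.length, if w.get j = b then 1 else 0 := by
  have h := Fin.card_filter_univ_eq_vector_get_eq_count b (⟨w, rfl⟩ : List.Vector ℕ w.length)
  have h2 : (List.Vector.toList (⟨w, rfl⟩ : List.Vector ℕ w.length)) = w := rfl
  have h3 : ∀ i, List.Vector.get (⟨w, rfl⟩ : List.Vector ℕ w.length) i = w.get i := by
    intro i; rfl
  rw [h2] at h
  simp only [h3] at h
  rw [← h, Finset.card_filter]

lemma cnt_cons (a b y : ℕ) (w : List ℕ) :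
    cnt a b (y :: w) = cnt a b w + if y = a then w.count b else 0 := by
  rw [cnt_eq_sum, cnt_eq_sum, count_eq_sum]
  simp only [List.length_cons]
  rw [Fin.sum_univ_succ]
  simp only [Fin.sum_univ_succ, List.get_cons_zero, List.get_cons_succ, List.get_cons_succ', Fin.succ_lt_succ_iff, Fin.not_lt_zero,
    Fin.succ_pos, lt_irrefl, false_and, if_false, true_and]
  split_ifs with h <;> simp [h, add_comm]

@[simp] lemma cnt_nil (a b : ℕ) : cnt a b [] = 0 := rfl

@[simp] lemma s1_nil : s1 [] = 0 := rfl

lemma s1_cons1 (w : List ℕ) : s1 (1 :: w) = s1 w - w.count 2 := by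
  simp [s1, cnt_cons]; ring

lemma s1_cons2 (w : List ℕ) : s1 (2 :: w) = s1 w + w.count 1 := by
  simp [s1, cnt_cons]; ring

lemma s1_cons3 (w : List ℕ) : s1 (3 :: w) = s1 w := by
  simp [s1, cnt_cons]

/-! ### membership in W -/

lemma mem_W {a b c : ℕ} {w : List ℕ} :
    w ∈ W a b c ↔ (w : Multiset ℕ) =
      Multiset.replicate a 1 + Multiset.replicate b 2 + Multiset.replicate c 3 := by
  have e : ((List.replicate a 1 ++ List.replicate b 2 ++ List.replicate c 3 : List ℕ) :
      Multiset ℕ) =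
      Multiset.replicate a 1 + Multiset.replicate b 2 + Multiset.replicate c 3 := by
    rw [← Multiset.coe_add, ← Multiset.coe_add]
    simp [Multiset.coe_replicate]
  rw [W, List.mem_toFinset, List.mem_permutations, ← Multiset.coe_eq_coe, e]

lemma count_of_mem_W {a b c : ℕ} {w : List ℕ} (h : w ∈ W a b c) :
    w.count 1 = a ∧ w.count 2 = b ∧ w.count 3 = c := by
  rw [mem_W] at h
  have h1 : Multiset.count 1 (w : Multiset ℕ) = a := by
    rw [h]; norm_num [Multiset.count_replicate]
  have h2 : Multiset.count 2 (w : Multiset ℕ) = b := by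
    rw [h]; norm_num [Multiset.count_replicate]
  have h3 : Multiset.count 3 (w : Multiset ℕ) = c := by
    rw [h]; norm_num [Multiset.count_replicate]
  rw [Multiset.coe_count] at h1 h2 h3
  exact ⟨h1, h2, h3⟩

lemma length_of_mem_W {a b c : ℕ} {w : List ℕ} (h : w ∈ W a b c) :
    w.length = a + b + c := by
  rw [mem_W] at h
  have := congrArg Multiset.card h
  simpa using this

lemma mem_of_mem_W {a b c : ℕ} {w : List ℕ} {y : ℕ} (h : w ∈ W a b c) (hy : y ∈ w) :
    y = 1 ∨ y = 2 ∨ y = 3 := by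
  rw [mem_W] at h
  have : y ∈ (w : Multiset ℕ) := by simpa using hy
  rw [h] at this
  simp only [Multiset.mem_add, Multiset.mem_replicate] at this
  rcases this with (⟨_, h'⟩ | ⟨_, h'⟩) | ⟨_, h'⟩ <;> simp [h']

lemma cons1_mem_W {a b c : ℕ} {t : List ℕ} :
    (1 :: t) ∈ W (a + 1) b c ↔ t ∈ W a b c := by
  rw [mem_W, mem_W, ← Multiset.cons_coe]
  rw [Multiset.replicate_succ, Multiset.cons_add, Multiset.cons_add, Multiset.cons_inj_right]

lemma cons2_mem_W {a b c : ℕ} {t : List ℕ} :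
    (2 :: t) ∈ W a (b + 1) c ↔ t ∈ W a b c := by
  rw [mem_W, mem_W, ← Multiset.cons_coe]
  rw [Multiset.replicate_succ, Multiset.add_cons, Multiset.cons_add, Multiset.cons_inj_right]

lemma cons3_mem_W {a b c : ℕ} {t : List ℕ} :
    (3 :: t) ∈ W a b (c + 1) ↔ t ∈ W a b c := by
  rw [mem_W, mem_W, ← Multiset.cons_coe]
  rw [Multiset.replicate_succ, Multiset.add_cons, Multiset.cons_inj_right]

lemma W_zero : W 0 0 0 = {([] : List ℕ)} := by
  ext w
  rw [mem_W]
  simp [Finset.mem_singleton]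

/-! ### decomposition of sums over W by head -/

lemma filter_head_eq (x a' b' c' A B C : ℕ) (hx : x ≠ 0)
    (hcons : ∀ t : List ℕ, (x :: t) ∈ W A B C ↔ t ∈ W a' b' c')
    (hcnt : ∀ w ∈ W A B C, w.count x ≠ 0) :
    (W A B C).filter (fun w => w.headI = x) = (W a' b' c').image (x :: ·) := by
  ext w
  simp only [Finset.mem_filter, Finset.mem_image]
  constructor
  · rintro ⟨hw, hh⟩
    rcases w with _ | ⟨y, t⟩
    · simp only [List.headI_nil] at hh
      exact absurd hh.symm hx
    · simp only [List.headI_cons] at hh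
      subst hh
      exact ⟨t, (hcons t).1 hw, rfl⟩
  · rintro ⟨t, ht, rfl⟩
    exact ⟨(hcons t).2 ht, rfl⟩

lemma filter_head_empty (x A B C : ℕ) (hx : x ≠ 0)
    (hcnt : ∀ w ∈ W A B C, w.count x = 0) :
    (W A B C).filter (fun w => w.headI = x) = ∅ := by
  ext w
  simp only [Finset.mem_filter, Finset.notMem_empty, iff_false, not_and]
  intro hw hh
  rcases w with _ | ⟨y, t⟩
  · simp only [List.headI_nil] at hh; exact hx hh.symm
  · simp only [List.headI_cons] at hh
    subst hh
    have := hcnt _ hw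
    simp [List.count_cons] at this

lemma sum_head_filter (x a' b' c' A B C : ℕ) (hx : x ≠ 0) (f : List ℕ → ℚ)
    (hcons : ∀ t : List ℕ, (x :: t) ∈ W A B C ↔ t ∈ W a' b' c')
    (hcnt : ∀ w ∈ W A B C, w.count x ≠ 0) :
    ∑ w ∈ (W A B C).filter (fun w => w.headI = x), f w = ∑ t ∈ W a' b' c', f (x :: t) := by
  rw [filter_head_eq x a' b' c' A B C hx hcons hcnt, Finset.sum_image]
  intro t _ t' _ h
  simpa using h

lemma decomp (f : List ℕ → ℚ) (a b c : ℕ) (h : 1 ≤ a + b + c) :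
    ∑ w ∈ W a b c, f w =
      (if a = 0 then 0 else ∑ t ∈ W (a-1) b c, f (1 :: t)) +
      (if b = 0 then 0 else ∑ t ∈ W a (b-1) c, f (2 :: t)) +
      (if c = 0 then 0 else ∑ t ∈ W a b (c-1), f (3 :: t)) := by
  classical
  have htri : ∀ w ∈ W a b c, w.headI = 1 ∨ w.headI = 2 ∨ w.headI = 3 := by
    intro w hw
    have hne : w ≠ [] := by
      intro h0
      have := length_of_mem_W hw
      rw [h0] at this
      simp at this
      omega
    rcases w with _ | ⟨y, t⟩
    · exact absurd rfl hne
    · exact mem_of_mem_W hw (by simp)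
  rw [← Finset.sum_filter_add_sum_filter_not (W a b c) (fun w => w.headI = 1) f]
  rw [← Finset.sum_filter_add_sum_filter_not
        ((W a b c).filter (fun w => ¬ w.headI = 1)) (fun w => w.headI = 2) f]
  rw [Finset.filter_filter, Finset.filter_filter]
  have e2 : (W a b c).filter (fun w => ¬ w.headI = 1 ∧ w.headI = 2)
      = (W a b c).filter (fun w => w.headI = 2) := by
    apply Finset.filter_congr
    intro w hw
    constructor
    · rintro ⟨_, h2⟩; exact h2
    · intro h2; exact ⟨by rw [h2]; norm_num, h2⟩
  have e3 : (W a b c).filter (fun w => ¬ w.headI = 1 ∧ ¬ w.headI = 2)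
      = (W a b c).filter (fun w => w.headI = 3) := by
    apply Finset.filter_congr
    intro w hw
    rcases htri w hw with h1 | h2 | h3
    · simp [h1]
    · simp [h2]
    · simp [h3]
  rw [e2, e3, add_assoc]
  congr 1
  · -- head = 1 part
    rcases Nat.eq_zero_or_pos a with ha | ha
    · subst ha
      rw [if_pos rfl, filter_head_empty 1 0 b c one_ne_zero
          (fun w hw => (count_of_mem_W hw).1), Finset.sum_empty]
    · obtain ⟨a', rfl⟩ := Nat.exists_eq_succ_of_ne_zero (Nat.pos_iff_ne_zero.1 ha)
      rw [if_neg (Nat.succ_ne_zero a')]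
      simp only [Nat.succ_sub_one]
      exact sum_head_filter 1 a' b c (a'+1) b c one_ne_zero f
        (fun t => cons1_mem_W)
        (fun w hw => by rw [(count_of_mem_W hw).1]; exact Nat.succ_ne_zero a')
  congr 1
  · rcases Nat.eq_zero_or_pos b with hb | hb
    · subst hb
      rw [if_pos rfl, filter_head_empty 2 a 0 c two_ne_zero
          (fun w hw => (count_of_mem_W hw).2.1), Finset.sum_empty]
    · obtain ⟨b', rfl⟩ := Nat.exists_eq_succ_of_ne_zero (Nat.pos_iff_ne_zero.1 hb)
      rw [if_neg (Nat.succ_ne_zero b')]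
      simp only [Nat.succ_sub_one]
      exact sum_head_filter 2 a b' c a (b'+1) c two_ne_zero f
        (fun t => cons2_mem_W)
        (fun w hw => by rw [(count_of_mem_W hw).2.1]; exact Nat.succ_ne_zero b')
  · rcases Nat.eq_zero_or_pos c with hc | hc
    · subst hc
      rw [if_pos rfl, filter_head_empty 3 a b 0 three_ne_zero
          (fun w hw => (count_of_mem_W hw).2.2), Finset.sum_empty]
    · obtain ⟨c', rfl⟩ := Nat.exists_eq_succ_of_ne_zero (Nat.pos_iff_ne_zero.1 hc)
      rw [if_neg (Nat.succ_ne_zero c')]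
      simp only [Nat.succ_sub_one]
      exact sum_head_filter 3 a b c' a b (c'+1) three_ne_zero f
        (fun t => cons3_mem_W)
        (fun w hw => by rw [(count_of_mem_W hw).2.2]; exact Nat.succ_ne_zero c')
/-! ### cardinality -/

lemma factorial_ne' (x y z : ℕ) : ((x.factorial : ℚ) * y.factorial * z.factorial) ≠ 0 := by
  positivity

lemma L1 (m : ℕ) : ∀ a b c : ℕ, a + b + c = m →
    ((W a b c).card : ℚ) * a.factorial * b.factorial * c.factorial = m.factorial := by
  induction m using Nat.strong_induction_on with
  | _ m ih =>
    intro a b c hm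
    rcases m with _ | m
    · obtain ⟨rfl, rfl, rfl⟩ : a = 0 ∧ b = 0 ∧ c = 0 := by omega
      simp [W_zero, Nat.factorial]
    · have h1 : 1 ≤ a + b + c := by omega
      have key : ∀ x y z : ℕ, x + y + z = m → ((W x y z).card : ℚ) =
          (m.factorial : ℚ) / (x.factorial * y.factorial * z.factorial) := by
        intro x y z hxyz
        have h := ih m (Nat.lt_succ_self m) x y z hxyz
        rw [eq_div_iff (factorial_ne' x y z)]
        linear_combination h
      have hN := decomp (fun _ => (1:ℚ)) a b c h1
      simp only [Finset.sum_const, nsmul_eq_mul, mul_one] at hN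
      have ga : (if a = 0 then (0:ℚ) else ((W (a-1) b c).card : ℚ)) *
          ((a.factorial : ℚ) * b.factorial * c.factorial) = a * m.factorial := by
        rcases a with _ | a'
        · simp
        · rw [if_neg (Nat.succ_ne_zero a'), Nat.succ_sub_one, key a' b c (by omega),
            Nat.factorial_succ]
          have hne := factorial_ne' a' b c
          field_simp
          push_cast
          ring
      have gb : (if b = 0 then (0:ℚ) else ((W a (b-1) c).card : ℚ)) *
          ((a.factorial : ℚ) * b.factorial * c.factorial) = b * m.factorial := by
        rcases b with _ | b'
        · simp
        · rw [if_neg (Nat.succ_ne_zero b'), Nat.succ_sub_one, key a b' c (by omega),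
            Nat.factorial_succ]
          have hne := factorial_ne' a b' c
          field_simp
          push_cast
          ring
      have gc : (if c = 0 then (0:ℚ) else ((W a b (c-1)).card : ℚ)) *
          ((a.factorial : ℚ) * b.factorial * c.factorial) = c * m.factorial := by
        rcases c with _ | c'
        · simp
        · rw [if_neg (Nat.succ_ne_zero c'), Nat.succ_sub_one, key a b c' (by omega),
            Nat.factorial_succ]
          have hne := factorial_ne' a b c'
          field_simp
          push_cast
          ring
      have habc : (a : ℚ) + b + c = (m : ℚ) + 1 := by exact_mod_cast congrArg (Nat.cast (R := ℚ)) hm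
      calc ((W a b c).card : ℚ) * a.factorial * b.factorial * c.factorial
          = ((if a = 0 then (0:ℚ) else ((W (a-1) b c).card : ℚ)) +
             (if b = 0 then (0:ℚ) else ((W a (b-1) c).card : ℚ)) +
             (if c = 0 then (0:ℚ) else ((W a b (c-1)).card : ℚ))) *
            ((a.factorial : ℚ) * b.factorial * c.factorial) := by rw [hN]; ring
        _ = (a : ℚ) * m.factorial + b * m.factorial + c * m.factorial := by
            rw [add_mul, add_mul, ga, gb, gc]
        _ = ((m+1).factorial : ℚ) := by
            rw [Nat.factorial_succ]
            push_cast
            linear_combination (m.factorial : ℚ) * habc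

lemma card_W_cast (a b c : ℕ) : ((W a b c).card : ℚ) *
    ((a.factorial : ℚ) * b.factorial * c.factorial) = ((a+b+c).factorial : ℚ) := by
  linear_combination L1 (a+b+c) a b c rfl

lemma gterm_a (a b c m : ℕ) (hm : a + b + c = m + 1) :
    (if a = 0 then (0:ℚ) else ((W (a-1) b c).card : ℚ)) *
      ((a.factorial : ℚ) * b.factorial * c.factorial) = a * m.factorial := by
  rcases a with _ | a'
  · simp
  · rw [if_neg (Nat.succ_ne_zero a'), Nat.succ_sub_one]
    have h := card_W_cast a' b c
    have hm' : a' + b + c = m := by omega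
    rw [hm'] at h
    rw [Nat.factorial_succ]
    push_cast
    linear_combination ((a' : ℚ) + 1) * h

lemma gterm_b (a b c m : ℕ) (hm : a + b + c = m + 1) :
    (if b = 0 then (0:ℚ) else ((W a (b-1) c).card : ℚ)) *
      ((a.factorial : ℚ) * b.factorial * c.factorial) = b * m.factorial := by
  rcases b with _ | b'
  · simp
  · rw [if_neg (Nat.succ_ne_zero b'), Nat.succ_sub_one]
    have h := card_W_cast a b' c
    have hm' : a + b' + c = m := by omega
    rw [hm'] at h
    rw [Nat.factorial_succ]
    push_cast
    linear_combination ((b' : ℚ) + 1) * h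

lemma gterm_c (a b c m : ℕ) (hm : a + b + c = m + 1) :
    (if c = 0 then (0:ℚ) else ((W a b (c-1)).card : ℚ)) *
      ((a.factorial : ℚ) * b.factorial * c.factorial) = c * m.factorial := by
  rcases c with _ | c'
  · simp
  · rw [if_neg (Nat.succ_ne_zero c'), Nat.succ_sub_one]
    have h := card_W_cast a b c'
    have hm' : a + b + c' = m := by omega
    rw [hm'] at h
    rw [Nat.factorial_succ]
    push_cast
    linear_combination ((c' : ℚ) + 1) * h

lemma L2 (m : ℕ) : ∀ a b c : ℕ, a + b + c = m →
    ∑ w ∈ W a b c, (s1 w : ℚ) = 0 := by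
  induction m using Nat.strong_induction_on with
  | _ m ih =>
    intro a b c hm
    rcases m with _ | m
    · obtain ⟨rfl, rfl, rfl⟩ : a = 0 ∧ b = 0 ∧ c = 0 := by omega
      simp [W_zero]
    · have h1 : 1 ≤ a + b + c := by omega
      rw [decomp (fun w => (s1 w : ℚ)) a b c h1]
      have t1 : (if a = 0 then (0:ℚ) else ∑ t ∈ W (a-1) b c, ((s1 (1 :: t) : ℚ)))
          = -(b : ℚ) * (if a = 0 then (0:ℚ) else ((W (a-1) b c).card : ℚ)) := by
        rcases a with _ | a'
        · simp
        · simp only [if_neg (Nat.succ_ne_zero a'), Nat.succ_sub_one]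
          have hcg : ∀ t ∈ W a' b c, ((s1 (1 :: t) : ℚ)) = (s1 t : ℚ) - b := by
            intro t ht
            have hb := (count_of_mem_W ht).2.1
            rw [s1_cons1]
            push_cast [hb]
            ring
          rw [Finset.sum_congr rfl hcg, Finset.sum_sub_distrib,
            ih m (Nat.lt_succ_self m) a' b c (by omega), Finset.sum_const]
          simp
          ring
      have t2 : (if b = 0 then (0:ℚ) else ∑ t ∈ W a (b-1) c, ((s1 (2 :: t) : ℚ)))
          = (a : ℚ) * (if b = 0 then (0:ℚ) else ((W a (b-1) c).card : ℚ)) := by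
        rcases b with _ | b'
        · simp
        · simp only [if_neg (Nat.succ_ne_zero b'), Nat.succ_sub_one]
          have hcg : ∀ t ∈ W a b' c, ((s1 (2 :: t) : ℚ)) = (s1 t : ℚ) + a := by
            intro t ht
            have ha := (count_of_mem_W ht).1
            rw [s1_cons2]
            push_cast [ha]
            ring
          rw [Finset.sum_congr rfl hcg, Finset.sum_add_distrib,
            ih m (Nat.lt_succ_self m) a b' c (by omega), Finset.sum_const]
          simp
          ring
      have t3 : (if c = 0 then (0:ℚ) else ∑ t ∈ W a b (c-1), ((s1 (3 :: t) : ℚ))) = 0 := by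
        rcases c with _ | c'
        · simp
        · simp only [if_neg (Nat.succ_ne_zero c'), Nat.succ_sub_one]
          have hcg : ∀ t ∈ W a b c', ((s1 (3 :: t) : ℚ)) = (s1 t : ℚ) := by
            intro t ht; rw [s1_cons3]
          rw [Finset.sum_congr rfl hcg, ih m (Nat.lt_succ_self m) a b c' (by omega)]
      rw [t1, t2, t3]
      have hga := gterm_a a b c m hm
      have hgb := gterm_b a b c m hm
      have hF := factorial_ne' a b c
      have key : (-(b : ℚ) * (if a = 0 then (0:ℚ) else ((W (a-1) b c).card : ℚ)) +
          (a : ℚ) * (if b = 0 then (0:ℚ) else ((W a (b-1) c).card : ℚ))) *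
          ((a.factorial : ℚ) * b.factorial * c.factorial) = 0 := by
        linear_combination (-(b:ℚ)) * hga + (a:ℚ) * hgb
      have := (mul_eq_zero.mp key).resolve_right hF
      linarith [this]

lemma L3 (m : ℕ) : ∀ a b c : ℕ, a + b + c = m →
    3 * ∑ w ∈ W a b c, ((s1 w : ℚ))^2 =
      (a : ℚ) * b * (a + b + 1) * ((W a b c).card : ℚ) := by
  induction m using Nat.strong_induction_on with
  | _ m ih =>
    intro a b c hm
    rcases m with _ | m
    · obtain ⟨rfl, rfl, rfl⟩ : a = 0 ∧ b = 0 ∧ c = 0 := by omega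
      simp [W_zero]
    · have h1 : 1 ≤ a + b + c := by omega
      have hF := factorial_ne' a b c
      have T1 : 3 * (if a = 0 then (0:ℚ) else ∑ t ∈ W (a-1) b c, ((s1 (1 :: t) : ℚ))^2) *
            ((a.factorial : ℚ) * b.factorial * c.factorial)
          = (a : ℚ) * (((a:ℚ) - 1) * b * ((a:ℚ) + b) + 3 * (b:ℚ)^2) * m.factorial := by
        rcases a with _ | a'
        · simp
        · rw [if_neg (Nat.succ_ne_zero a'), Nat.succ_sub_one]
          have hcg : ∀ t ∈ W a' b c, ((s1 (1 :: t) : ℚ))^2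
              = (s1 t : ℚ)^2 - 2 * b * (s1 t : ℚ) + (b:ℚ)^2 := by
            intro t ht
            have hb := (count_of_mem_W ht).2.1
            rw [s1_cons1]
            push_cast [hb]
            ring
          rw [Finset.sum_congr rfl hcg]
          have hR1 := ih m (Nat.lt_succ_self m) a' b c (by omega)
          have hR2 := gterm_a (a'+1) b c m (by omega)
          rw [if_neg (Nat.succ_ne_zero a'), Nat.succ_sub_one] at hR2
          have hS := L2 (a' + b + c) a' b c rfl
          rw [Finset.sum_add_distrib, Finset.sum_sub_distrib, ← Finset.mul_sum, hS,
            Finset.sum_const, nsmul_eq_mul]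
          push_cast
          push_cast at hR1 hR2
          linear_combination (((a'+1).factorial : ℚ) * b.factorial * c.factorial) * hR1 +
            (((a':ℚ)) * b * ((a':ℚ) + b + 1) + 3 * (b:ℚ)^2) * hR2
      have T2 : 3 * (if b = 0 then (0:ℚ) else ∑ t ∈ W a (b-1) c, ((s1 (2 :: t) : ℚ))^2) *
            ((a.factorial : ℚ) * b.factorial * c.factorial)
          = (b : ℚ) * ((a:ℚ) * ((b:ℚ) - 1) * ((a:ℚ) + b) + 3 * (a:ℚ)^2) * m.factorial := by
        rcases b with _ | b'
        · simp
        · rw [if_neg (Nat.succ_ne_zero b'), Nat.succ_sub_one]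
          have hcg : ∀ t ∈ W a b' c, ((s1 (2 :: t) : ℚ))^2
              = (s1 t : ℚ)^2 + 2 * a * (s1 t : ℚ) + (a:ℚ)^2 := by
            intro t ht
            have ha := (count_of_mem_W ht).1
            rw [s1_cons2]
            push_cast [ha]
            ring
          rw [Finset.sum_congr rfl hcg]
          have hR1 := ih m (Nat.lt_succ_self m) a b' c (by omega)
          have hR2 := gterm_b a (b'+1) c m (by omega)
          rw [if_neg (Nat.succ_ne_zero b'), Nat.succ_sub_one] at hR2
          have hS := L2 (a + b' + c) a b' c rfl
          rw [Finset.sum_add_distrib, Finset.sum_add_distrib, ← Finset.mul_sum, hS,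
            Finset.sum_const, nsmul_eq_mul]
          push_cast
          push_cast at hR1 hR2
          linear_combination ((a.factorial : ℚ) * (b'+1).factorial * c.factorial) * hR1 +
            (((a:ℚ)) * b' * ((a:ℚ) + b' + 1) + 3 * (a:ℚ)^2) * hR2
      have T3 : 3 * (if c = 0 then (0:ℚ) else ∑ t ∈ W a b (c-1), ((s1 (3 :: t) : ℚ))^2) *
            ((a.factorial : ℚ) * b.factorial * c.factorial)
          = (c : ℚ) * ((a:ℚ) * b * ((a:ℚ) + b + 1)) * m.factorial := by
        rcases c with _ | c'
        · simp
        · rw [if_neg (Nat.succ_ne_zero c'), Nat.succ_sub_one]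
          have hcg : ∀ t ∈ W a b c', ((s1 (3 :: t) : ℚ))^2 = (s1 t : ℚ)^2 := by
            intro t ht; rw [s1_cons3]
          rw [Finset.sum_congr rfl hcg]
          have hR1 := ih m (Nat.lt_succ_self m) a b c' (by omega)
          have hR2 := gterm_c a b (c'+1) m (by omega)
          rw [if_neg (Nat.succ_ne_zero c'), Nat.succ_sub_one] at hR2
          push_cast
          push_cast at hR1 hR2
          linear_combination ((a.factorial : ℚ) * b.factorial * (c'+1).factorial) * hR1 +
            ((a:ℚ) * b * ((a:ℚ) + b + 1)) * hR2
      have hNF := card_W_cast a b c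
      rw [hm] at hNF
      have hfs : (((m+1).factorial : ℕ) : ℚ) = ((m:ℚ) + 1) * m.factorial := by
        rw [Nat.factorial_succ]; push_cast; ring
      have habc : (a : ℚ) + b + c = (m : ℚ) + 1 := by
        exact_mod_cast congrArg (Nat.cast (R := ℚ)) hm
      have main : (3 * ((if a = 0 then (0:ℚ) else ∑ t ∈ W (a-1) b c, ((s1 (1 :: t) : ℚ))^2) +
            (if b = 0 then (0:ℚ) else ∑ t ∈ W a (b-1) c, ((s1 (2 :: t) : ℚ))^2) +
            (if c = 0 then (0:ℚ) else ∑ t ∈ W a b (c-1), ((s1 (3 :: t) : ℚ))^2))) *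
            ((a.factorial : ℚ) * b.factorial * c.factorial) =
          ((a : ℚ) * b * ((a:ℚ) + b + 1) * ((W a b c).card : ℚ)) *
            ((a.factorial : ℚ) * b.factorial * c.factorial) := by
        linear_combination T1 + T2 + T3 - (a:ℚ) * b * ((a:ℚ)+b+1) * hNF +
          (a:ℚ) * b * ((a:ℚ)+b+1) * (m.factorial : ℚ) * habc -
          (a:ℚ) * b * ((a:ℚ)+b+1) * hfs
      have hmain := mul_right_cancel₀ hF main
      rw [decomp (fun w => ((s1 w : ℚ))^2) a b c h1]
      linarith [hmain]

theorem mean_and_variance_s1 (n : ℕ) (hn : 1 ≤ n) :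
    (∑ w ∈ W n n n, (s1 w : ℚ)) / ((W n n n).card : ℚ) = 0 ∧
    (∑ w ∈ W n n n,
        ((s1 w : ℚ) - (∑ v ∈ W n n n, (s1 v : ℚ)) / ((W n n n).card : ℚ)) ^ 2) /
      ((W n n n).card : ℚ) = (n : ℚ) ^ 2 * (2 * n + 1) / 3 := by
  have hS := L2 (n+n+n) n n n rfl
  have hQ := L3 (n+n+n) n n n rfl
  have hNne : ((W n n n).card : ℚ) ≠ 0 := by
    have h := card_W_cast n n n
    have hfne : (((n+n+n).factorial : ℕ) : ℚ) ≠ 0 := by positivity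
    intro h0
    rw [h0, zero_mul] at h
    exact hfne h.symm
  constructor
  · rw [hS, zero_div]
  · simp only [hS, zero_div, sub_zero]
    rw [div_eq_iff hNne]
    linear_combination hQ / 3
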